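/- arXiv:1804.05233 — 2 statements merged into one kernel-verified Lean document; each statement's English description precedes it below -/
import Mathlib

section
/- Let B be a C*-algebra, E a Hilbert B-module, and K a subset of E. Then K is an ideal submodule of E (i.e. K equals the closed linear span of {x·i : x ∈ E, i ∈ I} for some closed two-sided ideal I of B) if and only if K is a closed ternary ideal of E (i.e. K is a closed linear subspace with x·⟨k,y⟩ ∈ K for all x, y ∈ E and k ∈ K). -/
open scoped RightActions

/-- The closed linear span of a subset of a topological `ℂ`-module. -/
noncomputable def clSpan {M : Type*} [AddCommMonoid M] [Module ℂ M] [TopologicalSpace M]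
    (S : Set M) : Set M :=
  closure (Submodule.span ℂ S : Set M)

/-- A subset is a (complex) linear subspace. -/
def IsLinearSubspace {M : Type*} [AddCommMonoid M] [Module ℂ M] (K : Set M) : Prop :=
  (0 : M) ∈ K ∧ (∀ x ∈ K, ∀ y ∈ K, x + y ∈ K) ∧ ∀ (c : ℂ), ∀ x ∈ K, c • x ∈ K

/-- A closed two-sided ideal of a C*-algebra `B`. -/
structure IsClosedTwoSidedIdeal {B : Type*} [NonUnitalCStarAlgebra B] (I : Set B) : Prop where
  isClosed : IsClosed I
  subspace : IsLinearSubspace I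
  mul_mem_left : ∀ (b : B), ∀ a ∈ I, b * a ∈ I
  mul_mem_right : ∀ (b : B), ∀ a ∈ I, a * b ∈ I

/-- The Mathlib (December 2024) class `RightCStarModule`: a right Hilbert `A`-module, with `A` acting
through `Aᵐᵒᵖ`. Mathlib's current `RightCStarModule` is a left module, hence the new name. -/
class RightCStarModule (A : outParam <| Type*) (E : Type*) [NonUnitalSemiring A] [StarRing A]
    [Module ℂ A] [AddCommGroup E] [Module ℂ E] [PartialOrder A] [SMul Aᵐᵒᵖ E] [Norm A] [Norm E]
    extends Inner A E where
  inner_add_right {x} {y} {z} : inner x (y + z) = inner x y + inner x z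
  inner_self_nonneg {x} : 0 ≤ inner x x
  inner_self {x} : inner x x = 0 ↔ x = 0
  inner_op_smul_right {a : A} {x y : E} : inner x (y <• a) = inner x y * a
  inner_smul_right_complex {z : ℂ} {x} {y} : inner x (z • y) = z • inner x y
  star_inner x y : star (inner x y) = inner y x
  norm_eq_sqrt_norm_inner_self x : ‖x‖ = √‖inner x x‖

section HilbertModule

variable (B : Type*) [NonUnitalCStarAlgebra B] [PartialOrder B] [StarOrderedRing B]
variable {E : Type*} [NormedAddCommGroup E] [NormedSpace ℂ E] [SMul Bᵐᵒᵖ E] [RightCStarModule B E]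

/-- `K ⊆ E` is an *ideal submodule* if it is the closed linear span of
`{x <• i : x ∈ E, i ∈ I}` for some closed two-sided ideal `I` of `B`. -/
def IsIdealSubmodule (K : Set E) : Prop :=
  ∃ I : Set B, IsClosedTwoSidedIdeal I ∧
    K = clSpan {z : E | ∃ x : E, ∃ i ∈ I, z = x <• i}

/-- A *ternary ideal* of a Hilbert `B`-module `E`: a linear subspace `K` with
`x <• ⟪k, y⟫ ∈ K` for all `x y ∈ E` and `k ∈ K`. -/
def IsTernaryIdeal (K : Set E) : Prop :=
  IsLinearSubspace K ∧ ∀ (x y : E), ∀ k ∈ K, x <• (inner B k y : B) ∈ K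

/-- `B_S`: the closed linear span in `B` of all inner products of elements of `S`. -/
noncomputable def rangeIdeal (S : Set E) : Set B :=
  clSpan {b : B | ∃ k ∈ S, ∃ k' ∈ S, b = (inner B k k' : B)}

/-- The orthogonal complement of a subset of a Hilbert `B`-module. -/
def perp (S : Set E) : Set E :=
  {x : E | ∀ s ∈ S, (inner B x s : B) = 0}

end HilbertModule


section AuxSpanHelpers


variable {M : Type*} [AddCommGroup M] [Module ℂ M] [TopologicalSpace M]

lemma subset_clSpan (S : Set M) : S ⊆ clSpan S :=
  fun _ hx => subset_closure (Submodule.subset_span hx)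

lemma isClosed_clSpan (S : Set M) : IsClosed (clSpan S) := isClosed_closure

lemma isLinearSubspace_clSpan [ContinuousAdd M] [ContinuousConstSMul ℂ M] (S : Set M) :
    IsLinearSubspace (clSpan S) := by
  have h : clSpan S = ((Submodule.span ℂ S).topologicalClosure : Set M) := rfl
  rw [h]
  exact ⟨Submodule.zero_mem _, fun x hx y hy => Submodule.add_mem _ hx hy,
    fun c x hx => Submodule.smul_mem _ c hx⟩

lemma clSpan_subset {S K : Set M} (hcl : IsClosed K) (hsub : IsLinearSubspace K)
    (hS : S ⊆ K) : clSpan S ⊆ K := by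
  refine closure_minimal ?_ hcl
  intro x hx
  rw [SetLike.mem_coe] at hx
  induction hx using Submodule.span_induction with
  | mem x hx => exact hS hx
  | zero => exact hsub.1
  | add x y _ _ hx hy => exact hsub.2.1 _ hx _ hy
  | smul c x _ hx => exact hsub.2.2 c _ hx

lemma clSpan_mapsTo {N : Type*} [AddCommGroup N] [Module ℂ N] [TopologicalSpace N]
    [ContinuousAdd N] [ContinuousConstSMul ℂ N]
    {T : M → N} (hadd : ∀ u v, T (u + v) = T u + T v)
    (hsmul : ∀ (c : ℂ) (v : M), ∃ c' : ℂ, T (c • v) = c' • T v)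
    (hcont : Continuous T) {S : Set M} {S' : Set N}
    (h : ∀ s ∈ S, T s ∈ clSpan S') : ∀ x ∈ clSpan S, T x ∈ clSpan S' := by
  have hzero : T 0 = 0 := by
    have h0 := hadd 0 0
    rw [add_zero] at h0
    have h1 : T 0 + T 0 = 0 + T 0 := by rw [zero_add]; exact h0.symm
    exact add_right_cancel h1
  set M' := (Submodule.span ℂ S').topologicalClosure with hM'
  have hM'coe : (M' : Set N) = clSpan S' := rfl
  have hP : IsClosed (T ⁻¹' (M' : Set N)) :=
    (Submodule.isClosed_topologicalClosure _).preimage hcont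
  intro x hx
  rw [← hM'coe]
  refine closure_minimal ?_ hP hx
  intro z hz
  rw [SetLike.mem_coe] at hz
  induction hz using Submodule.span_induction with
  | mem w hw => exact (hM'coe ▸ h w hw : _)
  | zero => simpa [hzero] using Submodule.zero_mem M'
  | add u v _ _ hu hv => simp only [Set.mem_preimage, hadd u v]; exact Submodule.add_mem M' hu hv
  | smul c v _ hv =>
    obtain ⟨c', hc'⟩ := hsmul c v
    simpa [Set.mem_preimage, hc'] using Submodule.smul_mem M' c' hv


end AuxSpanHelpers

section AuxModuleHelpers


variable {B : Type*} [NonUnitalCStarAlgebra B] [PartialOrder B] [StarOrderedRing B]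
variable {E : Type*} [NormedAddCommGroup E] [NormedSpace ℂ E] [SMul Bᵐᵒᵖ E] [RightCStarModule B E]

namespace RightCStarModule

lemma inner_add_left {x y z : E} : (inner B (x + y) z : B) = inner B x z + inner B y z := by
  rw [← star_inner z (x + y), inner_add_right, star_add, star_inner, star_inner]

lemma inner_op_smul_left {a : B} {x y : E} : (inner B (x <• a) y : B) = star a * inner B x y := by
  rw [← star_inner y (x <• a), inner_op_smul_right, star_mul, star_inner]

lemma inner_smul_left_complex {z : ℂ} {x y : E} : (inner B (z • x) y : B) = star z • inner B x y := by
  rw [← star_inner y (z • x), inner_smul_right_complex, star_smul, star_inner]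

lemma inner_sub_right {x y z : E} : (inner B x (y - z) : B) = inner B x y - inner B x z := by
  apply eq_sub_of_add_eq
  rw [← inner_add_right, sub_add_cancel]

lemma inner_sub_left {x y z : E} : (inner B (x - y) z : B) = inner B x z - inner B y z := by
  apply eq_sub_of_add_eq
  rw [← inner_add_left, sub_add_cancel]

lemma norm_sq_eq (x : E) : ‖x‖ ^ 2 = ‖(inner B x x : B)‖ := by
  rw [norm_eq_sqrt_norm_inner_self x, Real.sq_sqrt (norm_nonneg _)]

end RightCStarModule

lemma norm_inner_le' (x y : E) : ‖(inner B x y : B)‖ ≤ ‖x‖ * ‖y‖ := by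
  rcases eq_or_ne x 0 with hx | hx
  · subst hx
    have h0 : (inner B (0 : E) y : B) = 0 := by
      have := RightCStarModule.inner_sub_left (B := B) (x := (0 : E)) (y := (0 : E)) (z := y)
      rwa [sub_self, sub_self] at this
    rw [h0, norm_zero]
    positivity
  · have hx' : 0 < ‖x‖ := norm_pos_iff.mpr hx
    have ht : 0 < ‖x‖ ^ 2 := by positivity
    have hxx : ‖(inner B x x : B)‖ = ‖x‖ ^ 2 := (RightCStarModule.norm_sq_eq x).symm
    have h1 : (0 : B) ≤ inner B (x <• (inner B x y : B) - ((‖x‖ ^ 2 : ℝ) : ℂ) • y)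
        (x <• (inner B x y : B) - ((‖x‖ ^ 2 : ℝ) : ℂ) • y) := RightCStarModule.inner_self_nonneg
    have h2 : (inner B (x <• (inner B x y : B) - ((‖x‖ ^ 2 : ℝ) : ℂ) • y)
        (x <• (inner B x y : B) - ((‖x‖ ^ 2 : ℝ) : ℂ) • y) : B)
        = star (inner B x y : B) * inner B x x * inner B x y
          - (‖x‖ ^ 2) • (inner B y x * inner B x y) - (‖x‖ ^ 2) • (inner B y x * inner B x y)
          + (‖x‖ ^ 2) • (‖x‖ ^ 2) • (inner B y y : B) := by
      simp only [RightCStarModule.inner_sub_left, RightCStarModule.inner_sub_right,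
        RightCStarModule.inner_op_smul_left, RightCStarModule.inner_op_smul_right,
        RightCStarModule.inner_smul_left_complex, RightCStarModule.inner_smul_right_complex,
        RightCStarModule.star_inner, mul_assoc]
      simp only [Complex.star_def, Complex.conj_ofReal, Complex.coe_smul, mul_smul_comm,
        smul_mul_assoc, mul_assoc, sub_mul, mul_sub, smul_sub]
      abel
    have h3 : star (inner B x y : B) * inner B x x * inner B x y
        ≤ (‖x‖ ^ 2) • (inner B y x * inner B x y) := by
      have := CStarAlgebra.star_left_conjugate_le_norm_smul (a := (inner B x y : B))
        (b := (inner B x x : B)) (RightCStarModule.star_inner x x)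
      rw [hxx, RightCStarModule.star_inner] at this
      rw [RightCStarModule.star_inner]
      exact this
    rw [h2] at h1
    have h4 := h1.trans (add_le_add (sub_le_sub_right (sub_le_sub_right h3 _) _) le_rfl)
    rw [sub_self, zero_sub, neg_add_eq_sub, sub_nonneg] at h4
    have h6 : inner B y x * inner B x y ≤ (‖x‖ ^ 2) • (inner B y y : B) :=
      (smul_le_smul_iff_of_pos_left ht).mp h4
    have h7 : ‖(inner B x y : B)‖ ^ 2 ≤ (‖x‖ * ‖y‖) ^ 2 := by
      calc ‖(inner B x y : B)‖ ^ 2 = ‖(inner B y x : B) * inner B x y‖ := by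
            rw [← RightCStarModule.star_inner x y, CStarRing.norm_star_mul_self, sq]
        _ ≤ ‖(‖x‖ ^ 2) • (inner B y y : B)‖ := by
            refine CStarAlgebra.norm_le_norm_of_nonneg_of_le ?_ h6
            rw [← RightCStarModule.star_inner x y]
            exact star_mul_self_nonneg _
        _ = (‖x‖ * ‖y‖) ^ 2 := by
            rw [norm_smul, Real.norm_of_nonneg ht.le, ← RightCStarModule.norm_sq_eq, mul_pow]
    exact (pow_le_pow_iff_left₀ (norm_nonneg _) (by positivity) two_ne_zero).mp h7

lemma inner_ext {u v : E} (h : ∀ z : E, (inner B z u : B) = inner B z v) : u = v := by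
  have h2 : (inner B (u - v) (u - v) : B) = 0 := by
    rw [RightCStarModule.inner_sub_right, h (u - v), sub_self]
  exact sub_eq_zero.mp (RightCStarModule.inner_self.mp h2)

lemma opSmul_add (x : E) (a b : B) : x <• (a + b) = x <• a + x <• b :=
  inner_ext (B := B) fun z => by
    simp only [RightCStarModule.inner_op_smul_right, RightCStarModule.inner_add_right, mul_add]

lemma opSmul_smulc (c : ℂ) (x : E) (a : B) : x <• (c • a) = c • (x <• a) :=
  inner_ext (B := B) fun z => by
    simp only [RightCStarModule.inner_op_smul_right, RightCStarModule.inner_smul_right_complex, mul_smul_comm]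

lemma opSmul_mul (x : E) (a b : B) : x <• (a * b) = (x <• a) <• b :=
  inner_ext (B := B) fun z => by
    simp only [RightCStarModule.inner_op_smul_right, mul_assoc]

lemma sub_opSmul (x y : E) (a : B) : (x - y) <• a = x <• a - y <• a :=
  inner_ext (B := B) fun z => by
    simp only [RightCStarModule.inner_op_smul_right, RightCStarModule.inner_sub_right, sub_mul]

lemma norm_opSmul_le (x : E) (a : B) : ‖x <• a‖ ≤ ‖x‖ * ‖a‖ := by
  have hb : ‖(inner B (x <• a) (x <• a) : B)‖ ≤ (‖x‖ * ‖a‖) ^ 2 := by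
    rw [RightCStarModule.inner_op_smul_right, RightCStarModule.inner_op_smul_left]
    calc ‖star a * (inner B x x : B) * a‖ ≤ ‖star a * (inner B x x : B)‖ * ‖a‖ := norm_mul_le _ _
      _ ≤ ‖star a‖ * ‖(inner B x x : B)‖ * ‖a‖ := by gcongr; exact norm_mul_le _ _
      _ = ‖a‖ * ‖x‖ ^ 2 * ‖a‖ := by rw [norm_star, RightCStarModule.norm_sq_eq]
      _ = (‖x‖ * ‖a‖) ^ 2 := by ring
  rw [RightCStarModule.norm_eq_sqrt_norm_inner_self]
  calc √‖(inner B (x <• a) (x <• a) : B)‖ ≤ √((‖x‖ * ‖a‖) ^ 2) := Real.sqrt_le_sqrt hb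
    _ = ‖x‖ * ‖a‖ := Real.sqrt_sq (by positivity)

/-- `a ↦ x <• a` as a continuous linear map. -/
noncomputable def opSmulCLM (x : E) : B →L[ℂ] E :=
  LinearMap.mkContinuous
    { toFun := fun a => x <• a
      map_add' := opSmul_add x
      map_smul' := fun c a => opSmul_smulc c x a } ‖x‖
    (fun a => norm_opSmul_le x a)

lemma opSmulCLM_apply (x : E) (a : B) : opSmulCLM x a = x <• a := rfl

lemma continuous_opSmul (x : E) : Continuous fun a : B => x <• a := (opSmulCLM x).continuous

lemma continuous_inner_left (y : E) : Continuous fun e : E => (inner B e y : B) :=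
  AddMonoidHomClass.continuous_of_bound (AddMonoidHom.mk' (fun e : E => (inner B e y : B))
    (fun u v => RightCStarModule.inner_add_left)) ‖y‖
    (fun e => (norm_inner_le' e y).trans_eq (mul_comm _ _))


end AuxModuleHelpers

section AuxKeyPre

lemma mem_of_closed_of_approx {X : Type*} [NormedAddCommGroup X] {C : Set X} (hC : IsClosed C)
    {u : X} (h : ∀ ε : ℝ, 0 < ε → ∃ v ∈ C, ‖u - v‖ ≤ ε) : u ∈ C := by
  rw [← hC.closure_eq, Metric.mem_closure_iff]
  intro ε hε
  obtain ⟨v, hv, hle⟩ := h (ε / 2) (by linarith)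
  exact ⟨v, hv, by rw [dist_eq_norm]; linarith⟩

end AuxKeyPre

section KeyLemmas

variable {B : Type*} [NonUnitalCStarAlgebra B] [PartialOrder B] [StarOrderedRing B]

lemma key_bound {ε t : ℝ} (hε : 0 < ε) (ht : 0 ≤ t) :
    t - t * (t * (t / (t + ε) ^ 2)) - t * (t / (t + ε) ^ 2) * t
      + t * (t / (t + ε) ^ 2) * t * (t * (t / (t + ε) ^ 2)) ≤ ε := by
  have hs : 0 < t + ε := by linarith
  have key : t - t * (t * (t / (t + ε) ^ 2)) - t * (t / (t + ε) ^ 2) * t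
      + t * (t / (t + ε) ^ 2) * t * (t * (t / (t + ε) ^ 2))
      = t * (ε * (2 * t + ε) / (t + ε) ^ 2) ^ 2 := by field_simp; ring
  rw [key, div_pow, ← mul_div_assoc, div_le_iff₀ (by positivity)]
  nlinarith [mul_nonneg ht hε.le, sq_nonneg t, sq_nonneg ε,
    mul_nonneg (mul_nonneg ht ht) (mul_nonneg hε.le hε.le), pow_nonneg ht 4,
    mul_nonneg ht (mul_nonneg (mul_nonneg hε.le hε.le) hε.le)]

lemma key (a : B) (ha : 0 ≤ a) {ε : ℝ} (hε : 0 < ε) :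
    ∃ c : B, IsSelfAdjoint (a * c) ∧
      ‖a - a * (a * c) - (a * c) * a + (a * c) * a * (a * c)‖ ≤ ε := by
  have hsa : IsSelfAdjoint a := .of_nonneg ha
  have hq : ∀ t ∈ quasispectrum ℝ a, 0 ≤ t := quasispectrum_nonneg_of_nonneg a ha
  set f : ℝ → ℝ := fun t => t / (t + ε) ^ 2 with hfdef
  have hfc : ContinuousOn f (quasispectrum ℝ a) := by
    apply ContinuousOn.div continuousOn_id (by fun_prop)
    intro t ht
    have := hq t ht
    positivity
  have hf0 : f 0 = 0 := by simp [hfdef]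
  set g : ℝ → ℝ := fun t => t * f t with hgdef
  have hgc : ContinuousOn g (quasispectrum ℝ a) := continuousOn_id.mul hfc
  have hg0 : g 0 = 0 := by simp [hgdef, hf0]
  have hidc : ContinuousOn (fun t : ℝ => t) (quasispectrum ℝ a) := continuousOn_id
  have e1 : a * cfcₙ f a = cfcₙ g a := by
    rw [hgdef, cfcₙ_mul (fun t : ℝ => t) f a hidc rfl hfc hf0, cfcₙ_id' ℝ a]
  refine ⟨cfcₙ f a, ?_, ?_⟩
  · rw [e1]; exact cfcₙ_predicate _ a
  rw [e1]
  have e2 : a * cfcₙ g a = cfcₙ (fun t => t * g t) a := by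
    rw [cfcₙ_mul (fun t : ℝ => t) g a hidc rfl hgc hg0, cfcₙ_id' ℝ a]
  have e3 : cfcₙ g a * a = cfcₙ (fun t => g t * t) a := by
    rw [cfcₙ_mul g (fun t : ℝ => t) a hgc hg0 hidc rfl, cfcₙ_id' ℝ a]
  have e4 : cfcₙ g a * a * cfcₙ g a = cfcₙ (fun t => g t * t * g t) a := by
    rw [cfcₙ_mul (fun t => g t * t) g a (hgc.mul hidc) (by simp [hg0]) hgc hg0, ← e3]
  have e5 : a - cfcₙ (fun t => t * g t) a - cfcₙ (fun t => g t * t) a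
      + cfcₙ (fun t => g t * t * g t) a
      = cfcₙ (fun t => t - t * g t - g t * t + g t * t * g t) a := by
    rw [cfcₙ_add (fun t => t - t * g t - g t * t) (fun t => g t * t * g t) a
      ((hidc.sub (hidc.mul hgc)).sub (hgc.mul hidc)) (by simp [hg0])
      ((hgc.mul hidc).mul hgc) (by simp [hg0]),
      cfcₙ_sub (fun t => t - t * g t) (fun t => g t * t) a (hidc.sub (hidc.mul hgc))
        (by simp [hg0]) (hgc.mul hidc) (by simp [hg0]),
      cfcₙ_sub (fun t : ℝ => t) (fun t => t * g t) a hidc rfl (hidc.mul hgc) (by simp [hg0]),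
      cfcₙ_id' ℝ a]
  rw [e2, e4, e3, e5]
  apply norm_cfcₙ_le
  intro t ht
  have ht0 := hq t ht
  rw [Real.norm_eq_abs, abs_le]
  constructor
  · have h1 : 0 ≤ t - t * g t - g t * t + g t * t * g t := by
      have h2 : t - t * g t - g t * t + g t * t * g t = t * (1 - f t * t) ^ 2 := by
        simp only [hgdef]; ring
      rw [h2]; positivity
    linarith
  · simpa [hgdef, hfdef] using key_bound hε ht0

lemma star_mem_ideal {I : Set B} (hI : IsClosedTwoSidedIdeal I) {i : B} (hi : i ∈ I) :
    star i ∈ I := by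
  apply mem_of_closed_of_approx hI.isClosed
  intro ε hε
  set j : B := star i with hjdef
  have ha : (0 : B) ≤ j * star j := by
    rw [hjdef, star_star]
    exact star_mul_self_nonneg i
  set a : B := j * star j with hadef
  have haI : a ∈ I := by
    rw [hadef, hjdef, star_star]
    exact hI.mul_mem_left (star i) i hi
  obtain ⟨c, hsa, hb⟩ := key a ha (ε := ε ^ 2) (by positivity)
  set d : B := a * c with hddef
  refine ⟨d * j, by rw [hddef, mul_assoc]; exact hI.mul_mem_right (c * j) a haI, ?_⟩
  have hstar : star d = d := hsa
  have hexp : (j - d * j) * star (j - d * j) = a - a * d - d * a + d * a * d := by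
    rw [star_sub, star_mul, hstar, hadef]
    noncomm_ring
  have hnorm : ‖j - d * j‖ * ‖j - d * j‖ = ‖a - a * d - d * a + d * a * d‖ := by
    rw [← hexp, CStarRing.norm_self_mul_star]
  nlinarith [norm_nonneg (j - d * j), hε, hb, hnorm]


end KeyLemmas

section AuxModuleMain

variable {B : Type*} [NonUnitalCStarAlgebra B] [PartialOrder B] [StarOrderedRing B]
variable {E : Type*} [NormedAddCommGroup E] [NormedSpace ℂ E] [SMul Bᵐᵒᵖ E] [RightCStarModule B E]


variable {B : Type*} [NonUnitalCStarAlgebra B] [PartialOrder B] [StarOrderedRing B]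
variable {E : Type*} [NormedAddCommGroup E] [NormedSpace ℂ E] [SMul Bᵐᵒᵖ E] [RightCStarModule B E]

lemma approx (x : E) {ε : ℝ} (hε : 0 < ε) :
    ∃ c : B, ‖x - x <• ((inner B x x : B) * c)‖ ≤ ε := by
  set a : B := inner B x x with hadef
  obtain ⟨c, hsa, hb⟩ := key a RightCStarModule.inner_self_nonneg (ε := ε ^ 2) (by positivity)
  refine ⟨c, ?_⟩
  set d : B := a * c with hddef
  have hstar : star d = d := hsa
  have hinner : (inner B (x - x <• d) (x - x <• d) : B) = a - a * d - d * a + d * a * d := by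
    simp only [RightCStarModule.inner_sub_right, RightCStarModule.inner_sub_left,
      RightCStarModule.inner_op_smul_right, RightCStarModule.inner_op_smul_left, hstar, ← hadef]
    noncomm_ring
  rw [RightCStarModule.norm_eq_sqrt_norm_inner_self, hinner]
  calc √‖a - a * d - d * a + d * a * d‖ ≤ √(ε ^ 2) := Real.sqrt_le_sqrt hb
    _ = ε := Real.sqrt_sq hε.le


lemma opSmul_mem_of_ternary {K : Set E} (hcl : IsClosed K) (ht : IsTernaryIdeal B K)
    {k : E} (hk : k ∈ K) (b : B) : k <• b ∈ K := by
  apply mem_of_closed_of_approx hcl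
  intro ε hε
  set a : B := inner B k k with hadef
  obtain ⟨c, hc⟩ := approx k (ε := ε / (‖b‖ + 1)) (by positivity)
  refine ⟨k <• (a * c * b), ?_, ?_⟩
  · have h1 : a * c * b = inner B k (k <• (c * b)) := by
      rw [RightCStarModule.inner_op_smul_right, ← hadef, mul_assoc]
    rw [h1]
    exact ht.2 k (k <• (c * b)) k hk
  · have heq : k <• b - k <• (a * c * b) = (k - k <• (a * c)) <• b := by
      rw [sub_opSmul, opSmul_mul k (a * c) b]
    rw [heq]
    calc ‖(k - k <• (a * c)) <• b‖ ≤ ‖k - k <• (a * c)‖ * ‖b‖ := norm_opSmul_le _ _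
      _ ≤ (ε / (‖b‖ + 1)) * ‖b‖ := mul_le_mul_of_nonneg_right hc (norm_nonneg b)
      _ ≤ ε := by
          rw [div_mul_eq_mul_div, div_le_iff₀ (by positivity)]
          nlinarith [norm_nonneg b, hε]


end AuxModuleMain

/-- `K` is an ideal submodule of `E` if and only if `K` is a closed ternary
ideal of `E`. -/
theorem isIdealSubmodule_iff_isClosed_and_isTernaryIdeal
    {B : Type*} [NonUnitalCStarAlgebra B] [PartialOrder B] [StarOrderedRing B]
    {E : Type*} [NormedAddCommGroup E] [NormedSpace ℂ E] [SMul Bᵐᵒᵖ E]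
    [RightCStarModule B E] [CompleteSpace E] (K : Set E) :
    IsIdealSubmodule B K ↔ IsClosed K ∧ IsTernaryIdeal B K := by
  unfold IsIdealSubmodule IsTernaryIdeal
  constructor
  · rintro ⟨I, hI, rfl⟩
    set gens := {z : E | ∃ x : E, ∃ i ∈ I, z = x <• i} with hgens
    refine ⟨isClosed_clSpan _, isLinearSubspace_clSpan _, ?_⟩
    intro x y k hk
    refine clSpan_mapsTo (T := fun e : E => x <• (inner B e y : B))
      (fun u v => by
        show x <• (inner B (u + v) y : B) = x <• (inner B u y : B) + x <• (inner B v y : B)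
        rw [RightCStarModule.inner_add_left, opSmul_add])
      (fun c v => ⟨star c, by
        show x <• (inner B (c • v) y : B) = star c • (x <• (inner B v y : B))
        rw [RightCStarModule.inner_smul_left_complex, opSmul_smulc]⟩)
      ((continuous_opSmul x).comp (continuous_inner_left y)) ?_ k hk
    rintro s ⟨z, i, hiI, rfl⟩
    apply subset_clSpan
    refine ⟨x, star i * (inner B z y : B), hI.mul_mem_right _ _ (star_mem_ideal hI hiI), ?_⟩
    show x <• (inner B (z <• i) y : B) = x <• (star i * inner B z y)
    rw [RightCStarModule.inner_op_smul_left]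
  · rintro ⟨hcl, ht⟩
    set S₀ := {b : B | ∃ k ∈ K, ∃ k' ∈ K, b = (inner B k k' : B)} with hS₀
    set I := clSpan S₀ with hI
    have hsmulmem : ∀ k ∈ K, ∀ b : B, k <• b ∈ K := fun k hk b =>
      opSmul_mem_of_ternary hcl ht hk b
    have hIdeal : IsClosedTwoSidedIdeal I := by
      refine ⟨isClosed_clSpan _, isLinearSubspace_clSpan _, ?_, ?_⟩
      · intro b a haI
        refine clSpan_mapsTo (T := fun a : B => b * a)
          (fun u v => mul_add b u v) (fun c v => ⟨c, mul_smul_comm c b v⟩)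
          (continuous_mul_left b) ?_ a haI
        rintro s ⟨k, hk, k', hk', rfl⟩
        apply subset_clSpan
        exact ⟨k <• star b, hsmulmem k hk (star b), k', hk', by
          rw [RightCStarModule.inner_op_smul_left, star_star]⟩
      · intro b a haI
        refine clSpan_mapsTo (T := fun a : B => a * b)
          (fun u v => add_mul u v b) (fun c v => ⟨c, smul_mul_assoc c v b⟩)
          (continuous_mul_right b) ?_ a haI
        rintro s ⟨k, hk, k', hk', rfl⟩
        apply subset_clSpan
        exact ⟨k, hk, k' <• b, hsmulmem k' hk' b, by rw [RightCStarModule.inner_op_smul_right]⟩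
    refine ⟨I, hIdeal, ?_⟩
    set gens := {z : E | ∃ x : E, ∃ i ∈ I, z = x <• i} with hgens
    apply Set.Subset.antisymm
    · intro k hk
      apply mem_of_closed_of_approx (isClosed_clSpan _)
      intro ε hε
      obtain ⟨c, hc⟩ := approx (B := B) k hε
      have haI : (inner B k k : B) ∈ I := subset_clSpan _ ⟨k, hk, k, hk, rfl⟩
      refine ⟨k <• ((inner B k k : B) * c), ?_, hc⟩
      exact subset_clSpan _ ⟨k, (inner B k k : B) * c, hIdeal.mul_mem_right c _ haI, rfl⟩
    · refine clSpan_subset hcl ht.1 ?_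
      rintro z ⟨x, i, hiI, rfl⟩
      have hKsub : clSpan K ⊆ K := clSpan_subset hcl ht.1 (subset_refl K)
      refine hKsub (clSpan_mapsTo (T := fun i : B => x <• i)
        (opSmul_add x) (fun c v => ⟨c, opSmul_smulc c x v⟩)
        (continuous_opSmul x) ?_ i hiI)
      rintro s ⟨k, hk, k', hk', rfl⟩
      exact subset_clSpan _ (ht.2 x k' k hk)
end

section
/- Let B be a C*-algebra, E a Hilbert B-module, I a closed two-sided ideal of B, and z ∈ E. If ⟨z,z⟩ ∈ I, then z lies in the closed linear span of {x·i : x ∈ E, i ∈ I}. Consequently, on the quotient of E by the ideal submodule K associated with I, the formula ⟨x+K, y+K⟩ := ⟨x,y⟩ + I defines a well-defined and definite B/I-valued inner product. -/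
open scoped RightActions

/-- The December 2024 Mathlib `CStarModule` (right action through `Aᵐᵒᵖ`), whose name
Mathlib now uses for a class with a different (left) action. -/
class OldCStarModule (A E : Type*) [NonUnitalSemiring A] [StarRing A] [Module ℂ A]
    [AddCommGroup E] [Module ℂ E] [PartialOrder A] [SMul Aᵐᵒᵖ E] [Norm A] [Norm E]
    extends Inner A E where
  inner_add_right {x} {y} {z} : inner x (y + z) = inner x y + inner x z
  inner_self_nonneg {x} : 0 ≤ inner x x
  inner_self {x} : inner x x = 0 ↔ x = 0
  inner_op_smul_right {a : A} {x y : E} : inner x (y <• a) = inner x y * a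
  inner_smul_right_complex {z : ℂ} {x} {y} : inner x (z • y) = z • inner x y
  star_inner x y : star (inner x y) = inner y x
  norm_eq_sqrt_norm_inner_self x : ‖x‖ = √‖inner x x‖

lemma IsClosedTwoSidedIdeal.exists_approx {B : Type*} [NonUnitalCStarAlgebra B]
    [PartialOrder B] [StarOrderedRing B] {I : Set B} (hI : IsClosedTwoSidedIdeal I)
    {a : B} (haI : a ∈ I) (ha : 0 ≤ a) {ε : ℝ} (hε : 0 < ε) :
    ∃ b ∈ I, star b = b ∧ ‖a - b * a - a * b + b * a * b‖ ≤ ε := by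
  have hA : (0 : Unitization ℂ B) ≤ (a : Unitization ℂ B) := Unitization.inr_nonneg_iff.mpr ha
  have hsa : IsSelfAdjoint (a : Unitization ℂ B) := IsSelfAdjoint.of_nonneg hA
  have hspec : ∀ t ∈ spectrum ℝ (a : Unitization ℂ B), 0 ≤ t :=
    fun t ht => spectrum_nonneg_of_nonneg hA ht
  set f : ℝ → ℝ := fun t => t * (t + ε)⁻¹ with hf_def
  have hg : ContinuousOn (fun t : ℝ => (t + ε)⁻¹) (spectrum ℝ (a : Unitization ℂ B)) := by
    apply ContinuousOn.inv₀ (by fun_prop)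
    intro t ht
    have := hspec t ht
    positivity
  have hf : ContinuousOn f (spectrum ℝ (a : Unitization ℂ B)) :=
    (continuous_id.continuousOn).mul hg
  set c : Unitization ℂ B := cfc f (a : Unitization ℂ B) with hc_def
  have hcsa : IsSelfAdjoint c := cfc_predicate f (a : Unitization ℂ B)
  have hc_eq : c = (a : Unitization ℂ B) * cfc (fun t : ℝ => (t + ε)⁻¹) (a : Unitization ℂ B) := by
    symm
    nth_rewrite 1 [show (a : Unitization ℂ B) = cfc (fun t : ℝ => t) (a : Unitization ℂ B) from
      (cfc_id' ℝ (a : Unitization ℂ B)).symm]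
    rw [← cfc_mul (fun t : ℝ => t) (fun t : ℝ => (t + ε)⁻¹) (a : Unitization ℂ B)
      (continuous_id.continuousOn) hg, ← hf_def, ← hc_def]
  have hfst : c.fst = 0 := by
    rw [hc_eq, Unitization.fst_mul, Unitization.fst_inr, zero_mul]
  have hc' : ((c.snd : B) : Unitization ℂ B) = c := by
    conv_rhs => rw [← Unitization.inl_fst_add_inr_snd_eq c]
    rw [hfst]
    simp
  have hmem : c.snd ∈ I := by
    have hsnd := congrArg (fun x : Unitization ℂ B => x.snd) hc_eq
    beta_reduce at hsnd
    rw [Unitization.snd_mul, Unitization.fst_inr, Unitization.snd_inr, zero_smul, zero_add]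
      at hsnd
    rw [hsnd]
    exact hI.subspace.2.1 _ (hI.subspace.2.2 _ a haI) _ (hI.mul_mem_right _ a haI)
  have hstar : star c.snd = c.snd := by
    have := congrArg (fun x : Unitization ℂ B => x.snd) hcsa.star_eq
    beta_reduce at this
    rwa [Unitization.snd_star] at this
  refine ⟨c.snd, hmem, hstar, ?_⟩
  have h1c : (1 : Unitization ℂ B) - c = cfc (fun t : ℝ => 1 - f t) (a : Unitization ℂ B) := by
    rw [cfc_sub _ _ _ continuousOn_const hf, cfc_const_one ℝ (a : Unitization ℂ B)]
  have hf1 : ContinuousOn (fun t : ℝ => 1 - f t) (spectrum ℝ (a : Unitization ℂ B)) :=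
    continuousOn_const.sub hf
  have key : (a : Unitization ℂ B) - c * (a : Unitization ℂ B) - (a : Unitization ℂ B) * c
      + c * (a : Unitization ℂ B) * c
      = cfc (fun t : ℝ => (1 - f t) * (t * (1 - f t))) (a : Unitization ℂ B) := by
    rw [cfc_mul (fun t : ℝ => 1 - f t) (fun t : ℝ => t * (1 - f t)) (a : Unitization ℂ B)
          hf1 ((continuous_id.continuousOn).mul hf1),
        cfc_mul (fun t : ℝ => t) (fun t : ℝ => 1 - f t) (a : Unitization ℂ B)
          (continuous_id.continuousOn) hf1,
        cfc_id' ℝ (a : Unitization ℂ B), ← h1c]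
    noncomm_ring
  have hbound : ‖cfc (fun t : ℝ => (1 - f t) * (t * (1 - f t))) (a : Unitization ℂ B)‖ ≤ ε := by
    apply norm_cfc_le hε.le
    intro t ht
    have ht0 := hspec t ht
    have htε : (0 : ℝ) < t + ε := by positivity
    have heq : (1 - f t) * (t * (1 - f t)) = t * ε ^ 2 / (t + ε) ^ 2 := by
      simp only [hf_def]
      field_simp
      ring
    rw [heq, Real.norm_eq_abs, abs_of_nonneg (by positivity), div_le_iff₀ (by positivity)]
    nlinarith [mul_nonneg (mul_nonneg hε.le ht0) ht0, mul_nonneg (mul_nonneg ht0 hε.le) hε.le,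
      mul_pos (mul_pos hε hε) hε]
  have hinr : ((a - c.snd * a - a * c.snd + c.snd * a * c.snd : B) : Unitization ℂ B)
      = (a : Unitization ℂ B) - c * (a : Unitization ℂ B) - (a : Unitization ℂ B) * c
        + c * (a : Unitization ℂ B) * c := by
    simp only [Unitization.inr_sub, Unitization.inr_add, Unitization.inr_mul, hc']
  calc ‖a - c.snd * a - a * c.snd + c.snd * a * c.snd‖
      = ‖((a - c.snd * a - a * c.snd + c.snd * a * c.snd : B) : Unitization ℂ B)‖ :=
        (Unitization.norm_inr _).symm
    _ ≤ ε := by rw [hinr, key]; exact hbound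

lemma IsClosedTwoSidedIdeal.star_mem {B : Type*} [NonUnitalCStarAlgebra B]
    [PartialOrder B] [StarOrderedRing B] {I : Set B} (hI : IsClosedTwoSidedIdeal I)
    {i : B} (hi : i ∈ I) : star i ∈ I := by
  have haI : star i * i ∈ I := hI.mul_mem_left (star i) i hi
  have ha : 0 ≤ star i * i := star_mul_self_nonneg i
  rw [← hI.isClosed.closure_eq, Metric.mem_closure_iff]
  intro ε hε
  obtain ⟨b, hbI, hbs, hb⟩ := hI.exists_approx haI ha (show (0:ℝ) < (ε/2)^2 by positivity)
  refine ⟨b * star i, hI.mul_mem_right (star i) b hbI, ?_⟩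
  have h1 : star i - b * star i = star (i - i * b) := by
    rw [star_sub, star_mul, hbs]
  have h3 : star (i - i * b) * (i - i * b)
      = star i * i - b * (star i * i) - (star i * i) * b + b * (star i * i) * b := by
    rw [star_sub, star_mul, hbs]
    noncomm_ring
  have h5 : ‖i - i * b‖ * ‖i - i * b‖ ≤ (ε/2)^2 := by
    rw [← CStarRing.norm_star_mul_self, h3]
    exact hb
  have h4 : ‖i - i * b‖ ≤ ε / 2 := by nlinarith [norm_nonneg (i - i * b)]
  rw [dist_eq_norm, h1, norm_star]
  have : ε / 2 < ε := by linarith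
  linarith

section lemmas

open scoped RightActions

variable {B : Type*} [NonUnitalCStarAlgebra B] [PartialOrder B] [StarOrderedRing B]
variable {E : Type*} [NormedAddCommGroup E] [NormedSpace ℂ E] [SMul Bᵐᵒᵖ E] [OldCStarModule B E]

omit [StarOrderedRing B] in
lemma ocm_inner_neg_right (x y : E) : inner B x (-y) = -inner B x y := by
  rw [← neg_one_smul ℂ y, OldCStarModule.inner_smul_right_complex, neg_one_smul]

omit [StarOrderedRing B] in
lemma ocm_inner_sub_right (x y z : E) : inner B x (y - z) = inner B x y - inner B x z := by
  rw [sub_eq_add_neg, OldCStarModule.inner_add_right, ocm_inner_neg_right, ← sub_eq_add_neg]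

omit [StarOrderedRing B] in
lemma ocm_inner_sub_left (x y z : E) : inner B (x - y) z = inner B x z - inner B y z := by
  rw [← OldCStarModule.star_inner z, ocm_inner_sub_right, star_sub, OldCStarModule.star_inner,
    OldCStarModule.star_inner]

omit [StarOrderedRing B] in
lemma ocm_inner_op_smul_left (a : B) (x y : E) : inner B (x <• a) y = star a * inner B x y := by
  rw [← OldCStarModule.star_inner y, OldCStarModule.inner_op_smul_right, star_mul,
    OldCStarModule.star_inner]

omit [StarOrderedRing B] in
lemma ocm_inner_smul_left_complex (c : ℂ) (x y : E) :
    inner B (c • x) y = star c • inner B x y := by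
  rw [← OldCStarModule.star_inner y, OldCStarModule.inner_smul_right_complex, star_smul,
    OldCStarModule.star_inner]

omit [StarOrderedRing B] in
lemma ocm_norm_sq_eq (x : E) : ‖x‖ ^ 2 = ‖inner B x x‖ := by
  rw [OldCStarModule.norm_eq_sqrt_norm_inner_self (A := B) x, Real.sq_sqrt (norm_nonneg _)]

lemma ocm_norm_inner_le (y w : E) : ‖inner B y w‖ ≤ ‖y‖ * ‖w‖ := by
  by_cases hy : y = 0
  · have h0 : inner B (0 : E) w = 0 := by simpa using ocm_inner_sub_left (B := B) (0 : E) 0 w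
    rw [hy, h0]
    simp
  obtain ⟨r, hr_def⟩ : ∃ r : ℝ, r = ‖y‖ ^ 2 := ⟨_, rfl⟩
  have hr : 0 < r := by
    rw [hr_def]
    have : 0 < ‖y‖ := norm_pos_iff.mpr hy
    positivity
  set a : B := inner B y w with ha_def
  have ha : inner B w y = star a := (OldCStarModule.star_inner y w).symm
  have h0 : (0 : B) ≤ inner B (y <• a - (r : ℂ) • w) (y <• a - (r : ℂ) • w) :=
    OldCStarModule.inner_self_nonneg
  have hexp : inner B (y <• a - (r : ℂ) • w) (y <• a - (r : ℂ) • w)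
      = star a * inner B y y * a - r • (star a * a) - r • (star a * a)
        + r • r • inner B w w := by
    simp only [ocm_inner_sub_left, ocm_inner_sub_right, ocm_inner_op_smul_left,
      OldCStarModule.inner_op_smul_right, ocm_inner_smul_left_complex,
      OldCStarModule.inner_smul_right_complex]
    simp only [Complex.star_def, Complex.conj_ofReal, Complex.coe_smul, mul_smul_comm,
      smul_mul_assoc, ha, ← ha_def, mul_assoc, mul_sub, sub_mul, smul_sub]
    abel
  have hle : star a * inner B y y * a ≤ r • (star a * a) := by
    have := CStarAlgebra.star_left_conjugate_le_norm_smul (a := a) (b := inner B y y)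
      (OldCStarModule.star_inner y y)
    rwa [← ocm_norm_sq_eq, ← hr_def] at this
  have hPQ : star a * a ≤ r • inner B w w := by
    have h2 : (0 : B) ≤ r • (star a * a) - r • (star a * a) - r • (star a * a)
        + r • r • inner B w w := (h0.trans_eq hexp).trans (by gcongr)
    have h3 : r • (star a * a) - r • (star a * a) - r • (star a * a) + r • r • inner B w w
        = r • (r • inner B w w) - r • (star a * a) := by abel
    rw [h3, sub_nonneg] at h2
    exact (smul_le_smul_iff_of_pos_left hr).mp h2
  have hsq : ‖a‖ ^ 2 ≤ (‖y‖ * ‖w‖) ^ 2 := by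
    calc ‖a‖ ^ 2 = ‖star a * a‖ := by rw [CStarRing.norm_star_mul_self, pow_two]
      _ ≤ ‖r • inner B w w‖ := CStarAlgebra.norm_le_norm_of_nonneg_of_le (star_mul_self_nonneg a) hPQ
      _ = r * ‖w‖ ^ 2 := by rw [norm_smul, Real.norm_of_nonneg hr.le, ocm_norm_sq_eq (B := B)]
      _ = (‖y‖ * ‖w‖) ^ 2 := by rw [hr_def]; ring
  exact (pow_le_pow_iff_left₀ (norm_nonneg _) (by positivity) two_ne_zero).mp hsq

lemma inner_mem_of_right_mem {I : Set B} (hI : IsClosedTwoSidedIdeal I) (y : E) (k : E)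
    (hk : k ∈ closure (Submodule.span ℂ {z : E | ∃ x : E, ∃ i ∈ I, z = x <• i} : Set E)) :
    (inner B y k : B) ∈ I := by
  have hspan : ∀ w ∈ (Submodule.span ℂ {z : E | ∃ x : E, ∃ i ∈ I, z = x <• i} : Set E),
      (inner B y w : B) ∈ I := by
    intro w hw
    induction hw using Submodule.span_induction with
    | mem x h =>
      obtain ⟨x', i, hi, rfl⟩ := h
      rw [OldCStarModule.inner_op_smul_right]
      exact hI.mul_mem_left _ i hi
    | zero => simpa [show inner B y (0 : E) = 0 by simpa using ocm_inner_sub_right (B := B) y (0 : E) 0] using hI.subspace.1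
    | add x z hx hz ihx ihz =>
      rw [OldCStarModule.inner_add_right]
      exact hI.subspace.2.1 _ ihx _ ihz
    | smul c x hx ihx =>
      rw [OldCStarModule.inner_smul_right_complex]
      exact hI.subspace.2.2 c _ ihx
  have hcont : Continuous (fun w : E => (inner B y w : B)) :=
    (LinearMap.mkContinuous
      ({ toFun := fun w => inner B y w,
         map_add' := fun _ _ => OldCStarModule.inner_add_right,
         map_smul' := fun c w => by
           show inner B y ((c : ℂ) • w) = (c : ℂ) • inner B y w
           exact OldCStarModule.inner_smul_right_complex } : E →ₗ[ℂ] B)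
      ‖y‖ (fun w => ocm_norm_inner_le y w)).continuous
  have := map_mem_closure hcont hk hspan
  rwa [hI.isClosed.closure_eq] at this

end lemmas

/-- if `⟨z,z⟩ ∈ I` then `z` lies in the ideal submodule `K` associated with
`I`; consequently `⟨x+K, y+K⟩ := ⟨x,y⟩ + I` is a well-defined and definite `B/I`-valued
inner product on `E/K`. -/
theorem inner_self_mem_ideal_imp_mem_idealSubmodule
    {B : Type*} [NonUnitalCStarAlgebra B] [PartialOrder B] [StarOrderedRing B]
    {E : Type*} [NormedAddCommGroup E] [NormedSpace ℂ E] [SMul Bᵐᵒᵖ E]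
    [OldCStarModule B E] [CompleteSpace E] (I : Set B) (hI : IsClosedTwoSidedIdeal I)
    (K : Set E) (hKdef : K = clSpan {z : E | ∃ x : E, ∃ i ∈ I, z = x <• i}) :
    (∀ z : E, (inner B z z : B) ∈ I → z ∈ K) ∧
    (∀ x x' y y' : E, x - x' ∈ K → y - y' ∈ K →
      (inner B x y : B) - (inner B x' y' : B) ∈ I) ∧
    (∀ x : E, (inner B x x : B) ∈ I → x ∈ K) := by
  have hS : ∀ z : E, (inner B z z : B) ∈ I → z ∈ K := by
    intro z hz
    rw [hKdef]
    unfold clSpan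
    rw [Metric.mem_closure_iff]
    intro ε hε
    obtain ⟨b, hbI, hbs, hb⟩ := hI.exists_approx hz OldCStarModule.inner_self_nonneg
      (show (0:ℝ) < (ε/2)^2 by positivity)
    refine ⟨z <• b, Submodule.subset_span ⟨z, b, hbI, rfl⟩, ?_⟩
    have hinner : (inner B (z - z <• b) (z - z <• b) : B)
        = (inner B z z : B) - b * inner B z z - inner B z z * b + b * (inner B z z : B) * b := by
      simp only [ocm_inner_sub_right, ocm_inner_sub_left,
        OldCStarModule.inner_op_smul_right, ocm_inner_op_smul_left, hbs]
      noncomm_ring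
    have h5 : ‖z - z <• b‖ ^ 2 ≤ (ε/2)^2 := by
      rw [ocm_norm_sq_eq (B := B), hinner]
      exact hb
    rw [dist_eq_norm]
    nlinarith [norm_nonneg (z - z <• b)]
  have hR : ∀ y : E, ∀ k ∈ K, (inner B y k : B) ∈ I := by
    intro y k hk
    rw [hKdef] at hk
    unfold clSpan at hk
    exact inner_mem_of_right_mem hI y k hk
  have hL : ∀ y : E, ∀ k ∈ K, (inner B k y : B) ∈ I := by
    intro y k hk
    have h := hI.star_mem (hR y k hk)
    rwa [OldCStarModule.star_inner] at h
  refine ⟨hS, ?_, hS⟩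
  intro x x' y y' hx hy
  have h1 : (inner B (x - x') y : B) ∈ I := hL y _ hx
  have h2 : (inner B x' (y - y') : B) ∈ I := hR x' _ hy
  have heq : (inner B x y : B) - (inner B x' y' : B)
      = (inner B (x - x') y : B) + (inner B x' (y - y') : B) := by
    simp only [ocm_inner_sub_left, ocm_inner_sub_right]
    abel
  rw [heq]
  exact hI.subspace.2.1 _ h1 _ h2
end
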